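/- Let β be a totally real cubic Perron number whose Galois conjugates α and γ satisfy −1 < α < 1 < γ < β. Then β^n is not a Parry number for any integer n ≥ 1, i.e. β has Parry order 0. -/

import Mathlib

/-- The β-transformation `x ↦ βx - ⌊βx⌋`. -/
noncomputable def betaT (β : ℝ) (x : ℝ) : ℝ := β * x - ⌊β * x⌋

/-- `β` is a Parry number: `β > 1` and the forward orbit of `1` under the
β-transformation is finite. -/
def IsParry (β : ℝ) : Prop :=
  1 < β ∧ Set.Finite {x : ℝ | ∃ n : ℕ, 1 ≤ n ∧ (betaT β)^[n] 1 = x}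

/-- `β` is a simple Parry number: Parry, and the orbit of `1` hits `0`. -/
def IsSimpleParry (β : ℝ) : Prop :=
  IsParry β ∧ ∃ n : ℕ, 1 ≤ n ∧ (betaT β)^[n] 1 = 0

/-- `β` is a Perron number: a real algebraic integer `β > 1` all of whose Galois
conjugates other than `β` itself have complex absolute value `< β`. -/
def IsPerron (β : ℝ) : Prop :=
  1 < β ∧ IsIntegral ℤ β ∧
    ∀ z : ℂ, Polynomial.aeval z (minpoly ℚ β) = 0 → z ≠ (β : ℂ) → ‖z‖ < β

/-- `β` is a Pisot number. -/
def IsPisot (β : ℝ) : Prop :=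
  1 < β ∧ IsIntegral ℤ β ∧
    ∀ z : ℂ, Polynomial.aeval z (minpoly ℚ β) = 0 → z ≠ (β : ℂ) → ‖z‖ < 1

/-- `β` is a Salem number. -/
def IsSalem (β : ℝ) : Prop :=
  1 < β ∧ IsIntegral ℤ β ∧
    (∀ z : ℂ, Polynomial.aeval z (minpoly ℚ β) = 0 → z ≠ (β : ℂ) → ‖z‖ ≤ 1) ∧
    (∃ z : ℂ, Polynomial.aeval z (minpoly ℚ β) = 0 ∧ ‖z‖ = 1)

/-- `β` has Parry order exactly `n`: if `n ≥ 1` then `β ^ n` is Parry, and no higher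
power of `β` is Parry. -/
def HasParryOrder (β : ℝ) (n : ℕ) : Prop :=
  (1 ≤ n → IsParry (β ^ n)) ∧ ∀ k : ℕ, n < k → ¬ IsParry (β ^ k)

/-- Mahler measure of an algebraic number `β`: product of `max 1 |α|` over the complex
roots `α` of the minimal polynomial of `β` over `ℚ`. -/
noncomputable def mahlerMeasureOf (β : ℝ) : ℝ :=
  (((minpoly ℚ β).map (algebraMap ℚ ℂ)).roots.map (fun z => max 1 (‖z‖))).prod
open Polynomial in
noncomputable def parryPoly (d : ℕ → ℤ) : ℕ → Polynomial ℚ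
  | 0 => 1
  | (j+1) => X * parryPoly d j - C ((d j : ℚ))

lemma aeval_parryPoly_succ (d : ℕ → ℤ) (t : ℝ) (j : ℕ) :
    Polynomial.aeval t (parryPoly d (j+1))
      = t * Polynomial.aeval t (parryPoly d j) - d j := by
  simp [parryPoly]

lemma aeval_parryPoly_sum (d : ℕ → ℤ) (t : ℝ) (ht : t ≠ 0) (N : ℕ) :
    Polynomial.aeval t (parryPoly d N)
      = t^N * (1 - ∑ i ∈ Finset.range N, (d i : ℝ) / t^(i+1)) := by
  induction N with
  | zero => simp [parryPoly]
  | succ N ih =>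
    rw [aeval_parryPoly_succ, ih, Finset.sum_range_succ]
    have h : t ^ (N+1) ≠ 0 := pow_ne_zero _ ht
    field_simp
    ring

/-- Core lemma: a Parry number has no real Galois conjugate strictly between 1 and itself. -/
lemma no_middle_conjugate (B t : ℝ) (hP : IsParry B)
    (htroot : Polynomial.aeval t (minpoly ℚ B) = 0) (ht1 : 1 < t) (htB : t < B) : False := by
  obtain ⟨hB, hfin⟩ := hP
  set x : ℕ → ℝ := fun j => (betaT B)^[j] 1 with hxdef
  set d : ℕ → ℤ := fun j => ⌊B * x j⌋ with hddef
  have hx0 : x 0 = 1 := rfl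
  have hxsucc : ∀ j, x (j+1) = B * x j - d j := by
    intro j
    have : x (j+1) = betaT B (x j) := Function.iterate_succ_apply' (betaT B) j 1
    rw [this]; rfl
  have hxnonneg : ∀ j, 0 ≤ x j := by
    intro j
    cases j with
    | zero => norm_num [hx0]
    | succ j =>
      rw [hxsucc]
      have h2 : Int.fract (B * x j) = B * x j - (d j : ℝ) := rfl
      rw [← h2]
      exact Int.fract_nonneg _
  have hxle1 : ∀ j, x j ≤ 1 := by
    intro j
    cases j with
    | zero => simp [hx0]
    | succ j =>
      rw [hxsucc]
      have h1 := Int.fract_lt_one (B * x j)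
      have h2 : Int.fract (B * x j) = B * x j - (d j : ℝ) := rfl
      rw [h2] at h1
      linarith
  have hdnonneg : ∀ j, (0:ℤ) ≤ d j := by
    intro j
    apply Int.floor_nonneg.2
    exact mul_nonneg (by linarith) (hxnonneg j)
  have hd0 : (1:ℤ) ≤ d 0 := by
    apply Int.le_floor.2
    simpa [hx0] using hB.le
  have hyB : ∀ j, Polynomial.aeval B (parryPoly d j) = x j := by
    intro j
    induction j with
    | zero => simp [parryPoly, hx0]
    | succ j ih => rw [aeval_parryPoly_succ, ih, hxsucc]
  -- find a repeat in the orbit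
  obtain ⟨k, m, hk1, hkm, hrep⟩ :
      ∃ k m : ℕ, 1 ≤ k ∧ k < m ∧ x k = x m := by
    have hmaps : Set.MapsTo (fun j : ℕ => (betaT B)^[j+1] 1) Set.univ
        {y : ℝ | ∃ n : ℕ, 1 ≤ n ∧ (betaT B)^[n] 1 = y} := by
      intro j _; exact ⟨j+1, by omega, rfl⟩
    obtain ⟨a, -, b, -, hab, heq⟩ :=
      Set.Infinite.exists_ne_map_eq_of_mapsTo Set.infinite_univ hmaps hfin
    rcases hab.lt_or_gt with hlt | hlt
    · exact ⟨a+1, b+1, by omega, by omega, heq⟩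
    · exact ⟨b+1, a+1, by omega, by omega, heq.symm⟩
  set p : ℕ := m - k with hpdef
  have hp1 : 1 ≤ p := by omega
  have hmkp : m = k + p := by omega
  -- periodicity of orbit and digits
  have hshift : ∀ i, x (i + m) = x (i + k) := by
    intro i
    show (betaT B)^[i + m] 1 = (betaT B)^[i + k] 1
    rw [Function.iterate_add_apply, Function.iterate_add_apply]
    exact congrArg _ hrep.symm
  have hxper : ∀ j, k ≤ j → x (j + p) = x j := by
    intro j hj
    have h1 : j + p = (j - k) + m := by omega
    have h2 : (j - k) + k = j := by omega
    rw [h1, hshift, h2]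
  have hdper : ∀ j, k ≤ j → d (j + p) = d j := by
    intro j hj
    simp only [hddef]
    rw [hxper j hj]
  -- transfer the repetition relation to the conjugate t
  have ht0 : (0:ℝ) < t := by linarith
  have htne : t ≠ 0 := ne_of_gt ht0
  have hB0 : (0:ℝ) < B := by linarith
  have hPB : Polynomial.aeval B (parryPoly d m - parryPoly d k) = 0 := by
    rw [map_sub, hyB, hyB, hrep, sub_self]
  obtain ⟨q, hq⟩ := minpoly.dvd ℚ B hPB
  set y : ℕ → ℝ := fun j => Polynomial.aeval t (parryPoly d j) with hy
  have hyt : y m = y k := by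
    have h0 : Polynomial.aeval t (parryPoly d m - parryPoly d k) = 0 := by
      rw [hq, map_mul, htroot, zero_mul]
    rw [map_sub] at h0
    have := sub_eq_zero.mp h0
    simpa [hy] using this
  have hyper : ∀ j, k ≤ j → y (j + p) = y j := by
    intro j hj
    induction j, hj using Nat.le_induction with
    | base => rw [← hmkp]; exact hyt
    | succ j hj ih =>
      have h1 : j + 1 + p = (j + p) + 1 := by omega
      rw [h1]
      show Polynomial.aeval t (parryPoly d ((j+p)+1)) = Polynomial.aeval t (parryPoly d (j+1))
      rw [aeval_parryPoly_succ, aeval_parryPoly_succ, hdper j hj]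
      have : Polynomial.aeval t (parryPoly d (j+p)) = Polynomial.aeval t (parryPoly d j) := ih
      rw [this]
  have hyiter : ∀ i : ℕ, y (k + i * p) = y k := by
    intro i
    induction i with
    | zero => simp
    | succ i ih =>
      have h1 : k + (i+1) * p = (k + i * p) + p := by ring
      rw [h1, hyper _ (by omega), ih]
  set c : ℝ := y k with hc
  set δ : ℝ := 1 / t - 1 / B with hδdef
  have hδ : 0 < δ := by
    rw [hδdef, sub_pos]
    exact one_div_lt_one_div_of_lt ht0 htB
  -- sum comparison
  have hcomp : ∀ N, 1 ≤ N →
      (∑ i ∈ Finset.range N, (d i : ℝ) / B^(i+1)) + δ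
        ≤ ∑ i ∈ Finset.range N, (d i : ℝ) / t^(i+1) := by
    intro N hN
    have key : δ ≤ ∑ i ∈ Finset.range N, ((d i : ℝ) / t^(i+1) - (d i : ℝ) / B^(i+1)) := by
      have h0mem : (0:ℕ) ∈ Finset.range N := Finset.mem_range.2 (by omega)
      refine le_trans ?_ (Finset.single_le_sum
        (f := fun i => (d i : ℝ) / t^(i+1) - (d i : ℝ) / B^(i+1)) ?_ h0mem)
      · have h1 : (1:ℝ) ≤ (d 0 : ℝ) := by exact_mod_cast hd0
        simp only [zero_add, pow_one]
        have e1 : (d 0 : ℝ) / t - (d 0 : ℝ) / B = (d 0 : ℝ) * δ := by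
          rw [hδdef]; ring
        rw [e1]
        nlinarith [h1, hδ]
      · intro i _
        have hdi : (0:ℝ) ≤ (d i : ℝ) := by exact_mod_cast hdnonneg i
        have hle : t^(i+1) ≤ B^(i+1) := pow_le_pow_left₀ ht0.le htB.le _
        have htp : (0:ℝ) < t^(i+1) := pow_pos ht0 _
        have : (d i : ℝ) / B^(i+1) ≤ (d i : ℝ) / t^(i+1) := by gcongr
        linarith
    rw [Finset.sum_sub_distrib] at key
    linarith
  -- choose a large index of the form k + J * p
  obtain ⟨J, hJ⟩ := pow_unbounded_of_one_lt (2 * (|c| + 1) / δ) ht1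
  set N : ℕ := k + J * p with hNdef
  have hJN : J ≤ N := by
    have : J ≤ J * p := Nat.le_mul_of_pos_right J (by omega)
    omega
  have htN : 2 * (|c| + 1) / δ < t ^ N :=
    lt_of_lt_of_le hJ (pow_le_pow_right₀ ht1.le hJN)
  have hN1 : 1 ≤ N := by omega
  have htN0 : (0:ℝ) < t ^ N := pow_pos ht0 _
  have hBN0 : (0:ℝ) < B ^ N := pow_pos hB0 _
  -- identities at t and at B
  have hcN : y N = c := hyiter J
  have eT : c = t^N * (1 - ∑ i ∈ Finset.range N, (d i : ℝ) / t^(i+1)) := by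
    rw [← hcN, hy]
    exact aeval_parryPoly_sum d t htne N
  have eB : x N = B^N * (1 - ∑ i ∈ Finset.range N, (d i : ℝ) / B^(i+1)) := by
    rw [← hyB N]
    exact aeval_parryPoly_sum d B (ne_of_gt hB0) N
  have hAt : c / t^N = 1 - ∑ i ∈ Finset.range N, (d i : ℝ) / t^(i+1) := by
    rw [eT]
    exact mul_div_cancel_left₀ _ (ne_of_gt htN0)
  have hAB : x N / B^N = 1 - ∑ i ∈ Finset.range N, (d i : ℝ) / B^(i+1) := by
    rw [eB]
    exact mul_div_cancel_left₀ _ (ne_of_gt hBN0)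
  clear_value x d y c δ N
  have hineq : c / t^N ≤ x N / B^N - δ := by
    have := hcomp N hN1
    rw [hAt, hAB]
    linarith
  -- conclude
  have hfrac1 : t^N / B^N ≤ 1 :=
    div_le_one_of_le₀ (pow_le_pow_left₀ ht0.le htB.le N) hBN0.le
  have hfrac0 : (0:ℝ) ≤ t^N / B^N := by positivity
  have h5 : x N / B^N * t^N ≤ 1 := by
    have e : x N / B^N * t^N = x N * (t^N / B^N) := by ring
    rw [e]
    calc x N * (t^N / B^N) ≤ 1 * 1 :=
          mul_le_mul (hxle1 N) hfrac1 hfrac0 (by norm_num)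
      _ = 1 := by norm_num
  have h6 : c ≤ (x N / B^N - δ) * t^N := (div_le_iff₀ htN0).1 hineq
  have h7 : (x N / B^N - δ) * t^N = x N / B^N * t^N - δ * t^N := by ring
  have h8 : 2 * (|c| + 1) < δ * t^N := by
    have := (div_lt_iff₀ hδ).1 htN
    linarith [this]
  have h9 : -|c| ≤ c := neg_abs_le c
  have h10 : 0 ≤ |c| := abs_nonneg c
  have h11 : c ≤ 1 - δ * t ^ N := by rw [h7] at h6; linarith
  linarith

lemma conj_pow_root (β γ : ℝ) (hβ : IsIntegral ℚ β)
    (hγ : Polynomial.aeval γ (minpoly ℚ β) = 0) (n : ℕ) :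
    Polynomial.aeval (γ ^ n) (minpoly ℚ (β ^ n)) = 0 := by
  haveI : Fact (Irreducible (minpoly ℚ β)) := ⟨minpoly.irreducible hβ⟩
  set f := minpoly ℚ β with hf
  let φβ : AdjoinRoot f →ₐ[ℚ] ℝ := AdjoinRoot.liftAlgHom f (Algebra.ofId ℚ ℝ) β (minpoly.aeval ℚ β)
  let φγ : AdjoinRoot f →ₐ[ℚ] ℝ := AdjoinRoot.liftAlgHom f (Algebra.ofId ℚ ℝ) γ hγ
  have hroot : Polynomial.aeval ((AdjoinRoot.root f)^n) (minpoly ℚ (β^n)) = 0 := by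
    have hinj : Function.Injective φβ := RingHom.injective (φβ : AdjoinRoot f →+* ℝ)
    apply hinj
    rw [map_zero, ← Polynomial.aeval_algHom_apply]
    rw [map_pow]
    have hrβ : φβ (AdjoinRoot.root f) = β := by
      exact AdjoinRoot.liftAlgHom_root _ _ _ _
    rw [hrβ]
    simp [φβ, map_pow, AdjoinRoot.liftAlgHom_root, minpoly.aeval]
  have := congrArg φγ hroot
  rw [map_zero, ← Polynomial.aeval_algHom_apply] at this
  rw [map_pow] at this
  have hrγ : φγ (AdjoinRoot.root f) = γ := by
    exact AdjoinRoot.liftAlgHom_root _ _ _ _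
  rw [hrγ] at this
  simpa [φγ, map_pow, AdjoinRoot.liftAlgHom_root] using this

/-- A totally real cubic Perron number whose conjugates satisfy
`-1 < α < 1 < γ < β` has no Parry positive power. -/
theorem totally_real_cubic_case_three (β : ℝ) (hβ : IsPerron β)
    (hdeg : (minpoly ℚ β).natDegree = 3)
    (α γ : ℝ)
    (hαroot : Polynomial.aeval α (minpoly ℚ β) = 0)
    (hγroot : Polynomial.aeval γ (minpoly ℚ β) = 0)
    (h1 : -1 < α) (h2 : α < 1) (h3 : 1 < γ) (h4 : γ < β) :
    ∀ n : ℕ, 1 ≤ n → ¬ IsParry (β ^ n) := by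
  intro n hn hP
  have hβ1 : 1 < β := hβ.1
  have hint : IsIntegral ℚ β := (hβ.2.1).tower_top
  have htroot := conj_pow_root β γ hint hγroot n
  have hγ0 : (0:ℝ) < γ := by linarith
  have ht1 : 1 < γ ^ n := one_lt_pow₀ h3 (by omega)
  have htB : γ ^ n < β ^ n := pow_lt_pow_left₀ h4 hγ0.le (by omega)
  exact no_middle_conjugate (β ^ n) (γ ^ n) hP htroot ht1 htB
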